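/- There exists a universal constant C₀ ≥ 0 with the following property. Let A be an m×n matrix with entries in [0,1] whose ℓ0-column sparsity Δ₀ satisfies Δ₀ ≥ 2, let c ∈ ℝ_{≥0}^n, let d ∈ ℕ^n, and let x ∈ ℝ_{≥0}^n satisfy the knapsack covering constraints with respect to A and d. Then there exists a random vector z ∈ ℕ^n such that almost surely Az ≥ 1 componentwise and z ≤ d componentwise, and E[⟨c,z⟩] ≤ (ln Δ₀ + ln ln Δ₀ + C₀)·⟨c,x⟩. -/

import Mathlib

open MeasureTheory

section Helpers
open Finset ENNReal

theorem sr (n : ℕ) (a : Fin n → ℝ) (d : Fin n → ℕ) (x : Fin n → ℝ)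
    (ha : ∀ j, 0 ≤ a j) (hx : ∀ j, 0 ≤ x j) :
    ∀ (k : ℕ) (J : Finset (Fin n)) (c : Fin n → ℝ) (b : ℝ),
      J.card + (J.filter (fun j => c j ≠ 0)).card ≤ k →
      (∀ j, 0 ≤ c j) → 0 < b →
      (∀ S ⊆ J, max 0 (b - ∑ j ∈ S, a j * (d j : ℝ)) ≤
        ∑ j ∈ J \ S, min (a j) (max 0 (b - ∑ j' ∈ S, a j' * (d j' : ℝ))) * x j) →
      ∃ w : Fin n → ℕ, (∀ j, j ∉ J → w j = 0) ∧ (∀ j, w j ≤ d j) ∧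
        b ≤ ∑ j ∈ J, a j * (w j : ℝ) ∧
        (∑ j ∈ J, c j * (w j : ℝ)) ≤ 2 * ∑ j ∈ J, c j * x j ∧
        (∀ β, b ≤ β → ∑ j ∈ J, min (a j) β * (w j : ℝ) ≤ b + β) := by
  intro k
  induction k using Nat.strong_induction_on with
  | _ k IH =>
    intro J c b hk hc hb hKC
    classical
    by_cases h0 : ∃ j₀ ∈ J, c j₀ = 0
    · obtain ⟨j₀, hj₀J, hcj₀⟩ := h0
      by_cases hbig : b ≤ a j₀ * (d j₀ : ℝ)
      · -- finish using j₀ alone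
        have ha0 : 0 < a j₀ := by
          rcases lt_or_ge (0:ℝ) (a j₀) with h | h
          · exact h
          · exfalso
            have hd : (0:ℝ) ≤ (d j₀ : ℝ) := Nat.cast_nonneg _
            nlinarith [ha j₀]
        set k₀ : ℕ := ⌈b / a j₀⌉₊ with hk₀
        have hk₀led : k₀ ≤ d j₀ := by
          apply Nat.ceil_le.mpr
          rw [div_le_iff₀ ha0]; nlinarith
        have hcov : b ≤ a j₀ * (k₀ : ℝ) := by
          have h1 : b / a j₀ ≤ (k₀ : ℝ) := Nat.le_ceil _
          calc b = a j₀ * (b / a j₀) := by field_simp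
            _ ≤ a j₀ * (k₀ : ℝ) := by nlinarith
        set w : Fin n → ℕ := fun j => if j = j₀ then k₀ else 0 with hwdef
        have hwj₀ : w j₀ = k₀ := by simp [hwdef]
        have hwne : ∀ j, j ≠ j₀ → w j = 0 := by intro j hj; simp [hwdef, hj]
        refine ⟨w, ?_, ?_, ?_, ?_, ?_⟩
        · intro j hj
          exact hwne j (fun h => hj (h ▸ hj₀J))
        · intro j
          by_cases h : j = j₀
          · rw [h, hwj₀]; exact hk₀led
          · rw [hwne j h]; exact Nat.zero_le _
        · rw [Finset.sum_eq_single_of_mem j₀ hj₀J]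
          · rw [hwj₀]; exact hcov
          · intro j hj hne; rw [hwne j hne]; simp
        · rw [Finset.sum_eq_single_of_mem j₀ hj₀J]
          · have hnn : (0:ℝ) ≤ ∑ j ∈ J, c j * x j :=
              Finset.sum_nonneg fun j _ => mul_nonneg (hc j) (hx j)
            rw [hcj₀, zero_mul]
            linarith
          · intro j hj hne; rw [hwne j hne]; simp
        · intro β hβ
          rw [Finset.sum_eq_single_of_mem j₀ hj₀J]
          · rw [hwj₀]
            rcases Nat.lt_or_ge k₀ 2 with h2 | h2
            · have hk1 : (k₀ : ℝ) ≤ 1 := by exact_mod_cast Nat.lt_succ_iff.mp h2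
              have h3 : 0 ≤ min (a j₀) β := le_min ha0.le (hb.trans_le hβ).le
              have h5 : min (a j₀) β * (k₀ : ℝ) ≤ β := by
                nlinarith [min_le_right (a j₀) β]
              linarith
            · -- k₀ ≥ 2 : a j₀ < b
              have hba : 1 < b / a j₀ := by
                by_contra h
                push_neg at h
                have : k₀ ≤ 1 := by
                  rw [hk₀]
                  exact Nat.ceil_le.mpr (by simpa using h)
                omega
              have hab : a j₀ < b := by
                rw [lt_div_iff₀ ha0] at hba; nlinarith
              have hmin : min (a j₀) β = a j₀ := min_eq_left (by linarith)
              rw [hmin]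
              have h4 : (k₀ : ℝ) < b / a j₀ + 1 := Nat.ceil_lt_add_one (by positivity)
              have := mul_lt_mul_of_pos_left h4 ha0
              rw [mul_add, mul_div_cancel₀ _ ha0.ne'] at this
              nlinarith
          · intro j hj hne; rw [hwne j hne]; simp
      · -- commit j₀ fully and recurse
        push_neg at hbig
        have hadnn : 0 ≤ a j₀ * (d j₀ : ℝ) := mul_nonneg (ha j₀) (Nat.cast_nonneg _)
        set b' : ℝ := b - a j₀ * (d j₀ : ℝ) with hb'
        have hb'pos : 0 < b' := by simp [hb']; linarith
        set J' : Finset (Fin n) := J.erase j₀ with hJ'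
        have hKC' : ∀ S ⊆ J', max 0 (b' - ∑ j ∈ S, a j * (d j : ℝ)) ≤
            ∑ j ∈ J' \ S, min (a j) (max 0 (b' - ∑ j' ∈ S, a j' * (d j' : ℝ))) * x j := by
          intro S hS
          have hj₀S : j₀ ∉ S := fun h => (Finset.mem_erase.mp (hS h)).1 rfl
          have hsub : insert j₀ S ⊆ J :=
            Finset.insert_subset hj₀J (hS.trans (Finset.erase_subset _ _))
          have := hKC (insert j₀ S) hsub
          rw [Finset.sum_insert hj₀S] at this
          have hset : J \ insert j₀ S = J' \ S := by
            ext j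
            simp only [Finset.mem_sdiff, Finset.mem_insert, hJ', Finset.mem_erase]
            tauto
          rw [hset] at this
          have harg : b - (a j₀ * (d j₀ : ℝ) + ∑ j' ∈ S, a j' * (d j' : ℝ))
              = b' - ∑ j' ∈ S, a j' * (d j' : ℝ) := by rw [hb']; ring
          rw [harg] at this
          exact this
        have hcard : J'.card + (J'.filter (fun j => c j ≠ 0)).card < k := by
          have h1 : J'.card < J.card := Finset.card_erase_lt_of_mem hj₀J
          have h2 : (J'.filter (fun j => c j ≠ 0)).card ≤ (J.filter (fun j => c j ≠ 0)).card :=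
            Finset.card_le_card (Finset.filter_subset_filter _ (Finset.erase_subset _ _))
          omega
        obtain ⟨w', hw'supp, hw'le, hw'cov, hw'cost, hw'inv⟩ :=
          IH _ hcard J' c b' le_rfl hc hb'pos hKC'
        have hw'j₀ : w' j₀ = 0 := hw'supp j₀ (Finset.notMem_erase _ _)
        set w : Fin n → ℕ := fun j => if j = j₀ then d j₀ else w' j with hwdef
        have hwj₀ : w j₀ = d j₀ := by simp [hwdef]
        have hwne : ∀ j, j ≠ j₀ → w j = w' j := by intro j hj; simp [hwdef, hj]
        refine ⟨w, ?_, ?_, ?_, ?_, ?_⟩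
        · intro j hj
          have hne : j ≠ j₀ := fun h => hj (h ▸ hj₀J)
          rw [hwne j hne]
          exact hw'supp j (fun h => hj (Finset.erase_subset _ _ h))
        · intro j
          by_cases h : j = j₀
          · rw [h, hwj₀]
          · rw [hwne j h]; exact hw'le j
        · rw [← Finset.insert_erase hj₀J, Finset.sum_insert (Finset.notMem_erase _ _)]
          rw [hwj₀]
          have heq : ∑ j ∈ J.erase j₀, a j * (w j : ℝ)
              = ∑ j ∈ J', a j * (w' j : ℝ) := by
            apply Finset.sum_congr rfl
            intro j hj
            rw [hwne j (Finset.mem_erase.mp hj).1]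
          rw [heq]
          linarith
        · rw [← Finset.insert_erase hj₀J, Finset.sum_insert (Finset.notMem_erase _ _),
            Finset.sum_insert (Finset.notMem_erase _ _)]
          rw [hwj₀, hcj₀, zero_mul]
          have he : ∑ j ∈ J.erase j₀, c j * (w j : ℝ)
              = ∑ j ∈ J', c j * (w' j : ℝ) := by
            apply Finset.sum_congr rfl
            intro j hj
            rw [hwne j (Finset.mem_erase.mp hj).1]
          rw [he]
          have hxnn : 0 ≤ c j₀ * x j₀ := mul_nonneg (hc j₀) (hx j₀)
          nlinarith [hw'cost]
        · intro β hβ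
          rw [← Finset.insert_erase hj₀J, Finset.sum_insert (Finset.notMem_erase _ _)]
          rw [hwj₀]
          have he : ∑ j ∈ J.erase j₀, min (a j) β * (w j : ℝ)
              = ∑ j ∈ J', min (a j) β * (w' j : ℝ) := by
            apply Finset.sum_congr rfl
            intro j hj
            rw [hwne j (Finset.mem_erase.mp hj).1]
          rw [he]
          have h1 : min (a j₀) β * (d j₀ : ℝ) ≤ a j₀ * (d j₀ : ℝ) :=
            mul_le_mul_of_nonneg_right (min_le_left _ _) (Nat.cast_nonneg _)
          have h2 := hw'inv β (by linarith)
          linarith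
    · -- case 3 : all costs nonzero on J
      push_neg at h0
      -- KC at S₀ = {j ∈ J : d j = 0} gives b ≤ ∑_{j ∈ A} min (a j) b * x j
      have hb0 : max (0:ℝ) b = b := max_eq_right hb.le
      set A : Finset (Fin n) := J.filter (fun j => 0 < a j ∧ 1 ≤ d j) with hAdef
      have hAJ : A ⊆ J := Finset.filter_subset _ _
      have hAsum : b ≤ ∑ j ∈ A, min (a j) b * x j := by
        have h1 := hKC (J.filter (fun j => d j = 0)) (Finset.filter_subset _ _)
        have h2 : ∑ j ∈ J.filter (fun j => d j = 0), a j * ((d j : ℕ) : ℝ) = 0 := by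
          apply Finset.sum_eq_zero
          intro j hj
          rw [(Finset.mem_filter.mp hj).2]
          simp
        rw [h2, sub_zero, hb0] at h1
        have h3 : A ⊆ J \ J.filter (fun j => d j = 0) := by
          intro j hj
          rw [Finset.mem_sdiff]
          obtain ⟨hjJ, hja, hjd⟩ := Finset.mem_filter.mp hj
          refine ⟨hjJ, fun hmem => ?_⟩
          have hd0 := (Finset.mem_filter.mp hmem).2
          omega
        have h4 : ∑ j ∈ J \ J.filter (fun j => d j = 0), min (a j) b * x j
            = ∑ j ∈ A, min (a j) b * x j := by
          symm
          apply Finset.sum_subset h3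
          intro j hjJ hjA
          rw [Finset.mem_sdiff, Finset.mem_filter] at hjJ
          have hd1 : 1 ≤ d j := by
            rcases Nat.eq_zero_or_pos (d j) with h | h
            · exact absurd ⟨hjJ.1, h⟩ hjJ.2
            · exact h
          have hja : ¬ 0 < a j := by
            intro hpos
            exact hjA (Finset.mem_filter.mpr ⟨hjJ.1, hpos, hd1⟩)
          have hja0 : a j = 0 := le_antisymm (not_lt.mp hja) (ha j)
          rw [hja0]
          rw [min_eq_left hb.le]
          ring
        rw [← h4]
        exact h1
      have hAne : A.Nonempty := by
        by_contra hA
        rw [Finset.not_nonempty_iff_eq_empty] at hA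
        rw [hA, Finset.sum_empty] at hAsum
        linarith
      obtain ⟨js, hjsA, hjsmin⟩ := A.exists_min_image (fun j => c j / min (a j) b) hAne
      have hjsJ : js ∈ J := hAJ hjsA
      have hminpos : ∀ j ∈ A, 0 < min (a j) b := by
        intro j hj
        exact lt_min (Finset.mem_filter.mp hj).2.1 hb
      have hcjs : 0 < c js := (hc js).lt_of_ne' (h0 js hjsJ)
      set δ : ℝ := c js / min (a js) b with hδdef
      have hδpos : 0 < δ := div_pos hcjs (hminpos js hjsA)
      set c₂ : Fin n → ℝ := fun j => if j ∈ A then c j - δ * min (a j) b else c j with hc₂def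
      have hc₂A : ∀ j ∈ A, c₂ j = c j - δ * min (a j) b := by
        intro j hj; simp [hc₂def, hj]
      have hc₂nA : ∀ j, j ∉ A → c₂ j = c j := by
        intro j hj; simp [hc₂def, hj]
      have hc₂nn : ∀ j, 0 ≤ c₂ j := by
        intro j
        by_cases hj : j ∈ A
        · rw [hc₂A j hj]
          have h1 := hjsmin j hj
          have h2 : δ * min (a j) b ≤ c j := by
            have := (le_div_iff₀ (hminpos j hj)).mp h1
            linarith
          linarith
        · rw [hc₂nA j hj]; exact hc j
      have hc₂js : c₂ js = 0 := by
        rw [hc₂A js hjsA, hδdef, div_mul_cancel₀ _ (hminpos js hjsA).ne']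
        ring
      have hfilterJ : J.filter (fun j => c j ≠ 0) = J := Finset.filter_eq_self.mpr h0
      have hcard : J.card + (J.filter (fun j => c₂ j ≠ 0)).card < k := by
        have hsub : J.filter (fun j => c₂ j ≠ 0) ⊆ J.erase js := by
          intro j hj
          obtain ⟨hjJ, hjc⟩ := Finset.mem_filter.mp hj
          rw [Finset.mem_erase]
          refine ⟨?_, hjJ⟩
          intro h
          rw [h] at hjc
          exact hjc hc₂js
        have h1 : (J.filter (fun j => c₂ j ≠ 0)).card ≤ (J.erase js).card :=
          Finset.card_le_card hsub
        have h2 : (J.erase js).card < J.card := Finset.card_erase_lt_of_mem hjsJ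
        rw [hfilterJ] at hk
        omega
      obtain ⟨w, hwsupp, hwle, hwcov, hwcost, hwinv⟩ :=
        IH _ hcard J c₂ b le_rfl hc₂nn hb hKC
      refine ⟨w, hwsupp, hwle, hwcov, ?_, hwinv⟩
      -- cost lift
      have hwnn : ∀ j, (0:ℝ) ≤ (w j : ℝ) := fun j => Nat.cast_nonneg _
      have hminnn : ∀ j, 0 ≤ min (a j) b := fun j => le_min (ha j) hb.le
      have hsplit : ∀ (y : Fin n → ℝ), (∀ j, 0 ≤ y j) →
          ∑ j ∈ J, c j * y j = ∑ j ∈ J, c₂ j * y j + δ * ∑ j ∈ A, min (a j) b * y j := by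
        intro y hy
        have h1 : ∀ j ∈ J, c j * y j
            = c₂ j * y j + (if j ∈ A then δ * (min (a j) b * y j) else 0) := by
          intro j hj
          by_cases hjA : j ∈ A
          · rw [hc₂A j hjA, if_pos hjA]; ring
          · rw [hc₂nA j hjA, if_neg hjA]; ring
        rw [Finset.sum_congr rfl h1, Finset.sum_add_distrib]
        congr 1
        rw [← Finset.sum_filter]
        have hfa : J.filter (fun j => j ∈ A) = A := by
          ext j
          simp only [Finset.mem_filter]
          exact ⟨fun h => h.2, fun h => ⟨hAJ h, h⟩⟩
        rw [hfa, Finset.mul_sum]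
      have hcw := hsplit (fun j => (w j : ℝ)) hwnn
      have hcx := hsplit x hx
      have hinvb := hwinv b le_rfl
      have hstep : δ * ∑ j ∈ A, min (a j) b * (w j : ℝ)
          ≤ δ * ∑ j ∈ J, min (a j) b * (w j : ℝ) := by
        apply mul_le_mul_of_nonneg_left _ hδpos.le
        apply Finset.sum_le_sum_of_subset_of_nonneg hAJ
        intro j _ _
        exact mul_nonneg (hminnn j) (hwnn j)
      have hminb : ∀ j, min (a j) b ≤ min (a j) b := fun j => le_rfl
      have hJminw : ∑ j ∈ J, min (a j) b * (w j : ℝ) ≤ b + b := hinvb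
      calc ∑ j ∈ J, c j * (w j : ℝ)
          = ∑ j ∈ J, c₂ j * (w j : ℝ) + δ * ∑ j ∈ A, min (a j) b * (w j : ℝ) := hcw
        _ ≤ 2 * ∑ j ∈ J, c₂ j * x j + δ * (b + b) := by
            have := hstep.trans (mul_le_mul_of_nonneg_left hJminw hδpos.le)
            linarith
        _ = 2 * (∑ j ∈ J, c j * x j - δ * ∑ j ∈ A, min (a j) b * x j) + 2 * δ * b := by
            rw [hcx]; ring
        _ ≤ 2 * ∑ j ∈ J, c j * x j := by
            have h5 : b ≤ ∑ j ∈ A, min (a j) b * x j := hAsum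
            nlinarith

lemma expect_prod (n : ℕ) (p : Fin n → ℝ) (h : Fin n → Bool → ℝ) :
    ∑ ω : Fin n → Bool, (∏ j, (if ω j then p j else 1 - p j)) * ∏ j, h j (ω j)
      = ∏ j, (p j * h j true + (1 - p j) * h j false) := by
  set F : Fin n → Bool → ℝ := fun j v => (if v then p j else 1 - p j) * h j v with hF
  have h1 : ∀ ω : Fin n → Bool,
      (∏ j, (if ω j then p j else 1 - p j)) * ∏ j, h j (ω j)
        = ∏ j, F j (ω j) := by
    intro ω; rw [← Finset.prod_mul_distrib]
  simp_rw [h1]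
  rw [← Fintype.piFinset_univ, ← Finset.prod_univ_sum]
  apply Finset.prod_congr rfl
  intro j _
  rw [Fintype.sum_bool]
  simp [hF]

lemma bern_mgf (p θ t : ℝ) (hp0 : 0 ≤ p) (hp1 : p ≤ 1) (hθ0 : 0 ≤ θ) (hθ1 : θ ≤ 1)
    (ht : 0 ≤ t) :
    p * Real.exp (-(t * θ)) + (1 - p) ≤ Real.exp (p * θ * (Real.exp (-t) - 1)) := by
  have hconv : Real.exp ((1 - θ) * 0 + θ * (-t)) ≤
      (1 - θ) * Real.exp 0 + θ * Real.exp (-t) := by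
    have := convexOn_exp.2 (Set.mem_univ (0:ℝ)) (Set.mem_univ (-t))
      (by linarith : (0:ℝ) ≤ 1 - θ) hθ0 (by ring)
    simpa using this
  have h2 : Real.exp (-(t * θ)) ≤ 1 - θ + θ * Real.exp (-t) := by
    have harg : (1 - θ) * 0 + θ * (-t) = -(t * θ) := by ring
    rw [harg] at hconv
    simpa using hconv
  have h3 : p * Real.exp (-(t * θ)) + (1 - p) ≤ 1 + p * θ * (Real.exp (-t) - 1) := by
    nlinarith
  have h4 : 1 + p * θ * (Real.exp (-t) - 1) ≤ Real.exp (p * θ * (Real.exp (-t) - 1)) := by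
    have := Real.add_one_le_exp (p * θ * (Real.exp (-t) - 1))
    linarith
  linarith

lemma chern_num (lam γ : ℝ) (hγ0 : 0 < γ) (hγ1 : γ ≤ 1) (hlam : Real.exp 1 ≤ lam) :
    Real.exp (Real.log lam * γ + (lam - 1 + γ) * (Real.exp (-Real.log lam) - 1))
      ≤ lam * Real.exp (2 - lam) := by
  have he1 : (1:ℝ) < Real.exp 1 := by
    have := Real.exp_one_gt_d9; linarith
  have hlam0 : (0:ℝ) < lam := by linarith
  have hlogl : 1 ≤ Real.log lam := by
    rw [show (1:ℝ) = Real.log (Real.exp 1) by rw [Real.log_exp]]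
    exact Real.log_le_log (Real.exp_pos 1) hlam
  have hexpneg : Real.exp (-Real.log lam) = 1 / lam := by
    rw [Real.exp_neg, Real.exp_log hlam0]; rw [one_div]
  rw [hexpneg]
  have hinv : lam * (1 / lam) = 1 := by field_simp
  have h1 : Real.log lam * γ + (lam - 1 + γ) * (1 / lam - 1)
      ≤ Real.log lam + 2 - lam := by
    have hinvpos : 0 < 1 / lam := by positivity
    have hle : 1 / lam ≤ 1 := by
      rw [div_le_one hlam0]; linarith
    nlinarith
  calc Real.exp (Real.log lam * γ + (lam - 1 + γ) * (1 / lam - 1))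
      ≤ Real.exp (Real.log lam + (2 - lam)) := Real.exp_le_exp.mpr (by linarith)
    _ = lam * Real.exp (2 - lam) := by rw [Real.exp_add, Real.exp_log hlam0]

lemma chernoff_row (n : ℕ) (p θ : Fin n → ℝ) (hp0 : ∀ j, 0 ≤ p j) (hp1 : ∀ j, p j ≤ 1)
    (hθ0 : ∀ j, 0 ≤ θ j) (b g lam : ℝ)
    (hb : 0 < b) (hθb : ∀ j, θ j ≤ b) (hg0 : 0 < g) (hgb : g ≤ b)
    (hlam : Real.exp 1 ≤ lam)
    (hmean : lam * b - b + g ≤ ∑ j, θ j * p j) :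
    ∑ ω ∈ Finset.univ.filter
        (fun ω : Fin n → Bool => ∑ j, θ j * (if ω j then (1:ℝ) else 0) < g),
      ∏ j, (if ω j then p j else 1 - p j)
      ≤ lam * Real.exp (2 - lam) := by
  classical
  have hlam0 : (0:ℝ) < lam := lt_of_lt_of_le (Real.exp_pos 1) hlam
  set t : ℝ := Real.log lam with htdef
  have ht0 : 0 < t := by
    rw [htdef]
    have : (1:ℝ) < lam := by
      have := Real.exp_one_gt_d9; linarith
    exact Real.log_pos this
  set γ : ℝ := g / b with hγdef
  have hγ0 : 0 < γ := div_pos hg0 hb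
  have hγ1 : γ ≤ 1 := by rw [hγdef, div_le_one hb]; linarith
  have hwnn : ∀ ω : Fin n → Bool, 0 ≤ ∏ j, (if ω j then p j else 1 - p j) := by
    intro ω
    apply Finset.prod_nonneg
    intro j _
    by_cases h : ω j <;> simp [h, hp0 j]
    linarith [hp1 j]
  -- step 1 : indicator bound
  have hstep1 : ∑ ω ∈ Finset.univ.filter
        (fun ω : Fin n → Bool => ∑ j, θ j * (if ω j then (1:ℝ) else 0) < g),
      ∏ j, (if ω j then p j else 1 - p j)
      ≤ ∑ ω : Fin n → Bool, (∏ j, (if ω j then p j else 1 - p j)) *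
          Real.exp ((t / b) * (g - ∑ j, θ j * (if ω j then (1:ℝ) else 0))) := by
    rw [← Finset.sum_filter_add_sum_filter_not Finset.univ
      (fun ω : Fin n → Bool => ∑ j, θ j * (if ω j then (1:ℝ) else 0) < g)
      (fun ω => (∏ j, (if ω j then p j else 1 - p j)) *
          Real.exp ((t / b) * (g - ∑ j, θ j * (if ω j then (1:ℝ) else 0))))]
    have hA : ∑ ω ∈ Finset.univ.filter
          (fun ω : Fin n → Bool => ∑ j, θ j * (if ω j then (1:ℝ) else 0) < g),
        ∏ j, (if ω j then p j else 1 - p j)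
        ≤ ∑ ω ∈ Finset.univ.filter
          (fun ω : Fin n → Bool => ∑ j, θ j * (if ω j then (1:ℝ) else 0) < g),
        (∏ j, (if ω j then p j else 1 - p j)) *
          Real.exp ((t / b) * (g - ∑ j, θ j * (if ω j then (1:ℝ) else 0))) := by
      apply Finset.sum_le_sum
      intro ω hω
      have hlt := (Finset.mem_filter.mp hω).2
      have hexp1 : (1:ℝ) ≤ Real.exp ((t / b) * (g - ∑ j, θ j * (if ω j then (1:ℝ) else 0))) := by
        apply Real.one_le_exp
        have h1 : 0 ≤ g - ∑ j, θ j * (if ω j then (1:ℝ) else 0) := by linarith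
        apply mul_nonneg _ h1
        positivity
      nlinarith [hwnn ω]
    have hB : 0 ≤ ∑ ω ∈ Finset.univ.filter
          (fun ω : Fin n → Bool => ¬(∑ j, θ j * (if ω j then (1:ℝ) else 0) < g)),
        (∏ j, (if ω j then p j else 1 - p j)) *
          Real.exp ((t / b) * (g - ∑ j, θ j * (if ω j then (1:ℝ) else 0))) := by
      apply Finset.sum_nonneg
      intro ω _
      exact mul_nonneg (hwnn ω) (Real.exp_pos _).le
    linarith
  -- step 2 : factorize
  have hstep2 : ∀ ω : Fin n → Bool,
      Real.exp ((t / b) * (g - ∑ j, θ j * (if ω j then (1:ℝ) else 0)))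
        = Real.exp (t * γ) * ∏ j, Real.exp (-((t / b) * θ j) * (if ω j then (1:ℝ) else 0)) := by
    intro ω
    rw [← Real.exp_sum, ← Real.exp_add]
    congr 1
    have h5 : ∑ x : Fin n, -((t / b) * θ x) * (if ω x then (1:ℝ) else 0)
        = -((t / b) * ∑ x : Fin n, θ x * (if ω x then (1:ℝ) else 0)) := by
      calc ∑ x : Fin n, -((t / b) * θ x) * (if ω x then (1:ℝ) else 0)
          = ∑ x : Fin n, -((t / b) * (θ x * (if ω x then (1:ℝ) else 0))) := by
            apply Finset.sum_congr rfl; intro j _; ring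
        _ = -∑ x : Fin n, (t / b) * (θ x * (if ω x then (1:ℝ) else 0)) := by
            rw [Finset.sum_neg_distrib]
        _ = -((t / b) * ∑ x : Fin n, θ x * (if ω x then (1:ℝ) else 0)) := by
            rw [Finset.mul_sum]
    rw [h5, hγdef]
    have hbne : b ≠ 0 := hb.ne'
    field_simp
    ring
  -- step 3 : expectation of the product
  set h : Fin n → Bool → ℝ :=
    fun j v => Real.exp (-((t / b) * θ j) * (if v then (1:ℝ) else 0)) with hhdef
  have hstep3 : ∑ ω : Fin n → Bool, (∏ j, (if ω j then p j else 1 - p j)) *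
        Real.exp ((t / b) * (g - ∑ j, θ j * (if ω j then (1:ℝ) else 0)))
      = Real.exp (t * γ) * ∏ j, (p j * h j true + (1 - p j) * h j false) := by
    rw [← expect_prod n p h]
    rw [Finset.mul_sum]
    apply Finset.sum_congr rfl
    intro ω _
    rw [hstep2 ω]
    ring
  -- step 4 : bound each factor
  have hfac : ∀ j, p j * h j true + (1 - p j) * h j false
      ≤ Real.exp (p j * (θ j / b) * (Real.exp (-t) - 1)) := by
    intro j
    have hθ1 : θ j / b ≤ 1 := by rw [div_le_one hb]; exact hθb j
    have hθ0' : 0 ≤ θ j / b := div_nonneg (hθ0 j) hb.le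
    have := bern_mgf (p j) (θ j / b) t (hp0 j) (hp1 j) hθ0' hθ1 ht0.le
    have harg : -(t * (θ j / b)) = -((t / b) * θ j) := by ring
    rw [harg] at this
    simpa [hhdef] using this
  have hfacnn : ∀ j, 0 ≤ p j * h j true + (1 - p j) * h j false := by
    intro j
    have h1 : 0 ≤ p j * h j true := mul_nonneg (hp0 j) (Real.exp_pos _).le
    have h2 : 0 ≤ (1 - p j) * h j false :=
      mul_nonneg (by linarith [hp1 j]) (Real.exp_pos _).le
    linarith
  have hstep4 : ∏ j, (p j * h j true + (1 - p j) * h j false)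
      ≤ ∏ j, Real.exp (p j * (θ j / b) * (Real.exp (-t) - 1)) := by
    apply Finset.prod_le_prod (fun j _ => hfacnn j) (fun j _ => hfac j)
  -- step 5 : combine exponents and use the mean bound
  have hstep5 : ∏ j, Real.exp (p j * (θ j / b) * (Real.exp (-t) - 1))
      ≤ Real.exp ((lam - 1 + γ) * (Real.exp (-t) - 1)) := by
    rw [← Real.exp_sum]
    apply Real.exp_le_exp.mpr
    have hsum : ∑ j, p j * (θ j / b) * (Real.exp (-t) - 1)
        = ((∑ j, θ j * p j) / b) * (Real.exp (-t) - 1) := by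
      rw [div_mul_eq_mul_div, Finset.sum_mul, Finset.sum_div]
      apply Finset.sum_congr rfl
      intro j _
      ring
    rw [hsum]
    have hM : lam - 1 + γ ≤ (∑ j, θ j * p j) / b := by
      rw [le_div_iff₀ hb, hγdef]
      have : (lam - 1 + g / b) * b = lam * b - b + g := by field_simp
      rw [this]
      exact hmean
    have hneg : Real.exp (-t) - 1 ≤ 0 := by
      have : Real.exp (-t) ≤ 1 := Real.exp_le_one_iff.mpr (by linarith)
      linarith
    nlinarith
  -- finish
  have hfinal : Real.exp (t * γ) * Real.exp ((lam - 1 + γ) * (Real.exp (-t) - 1))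
      ≤ lam * Real.exp (2 - lam) := by
    rw [← Real.exp_add, htdef]
    exact chern_num lam γ hγ0 hγ1 hlam
  calc ∑ ω ∈ Finset.univ.filter
        (fun ω : Fin n → Bool => ∑ j, θ j * (if ω j then (1:ℝ) else 0) < g),
      ∏ j, (if ω j then p j else 1 - p j)
      ≤ ∑ ω : Fin n → Bool, (∏ j, (if ω j then p j else 1 - p j)) *
          Real.exp ((t / b) * (g - ∑ j, θ j * (if ω j then (1:ℝ) else 0))) := hstep1
    _ = Real.exp (t * γ) * ∏ j, (p j * h j true + (1 - p j) * h j false) := hstep3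
    _ ≤ Real.exp (t * γ) * Real.exp ((lam - 1 + γ) * (Real.exp (-t) - 1)) := by
        apply mul_le_mul_of_nonneg_left _ (Real.exp_pos _).le
        exact hstep4.trans hstep5
    _ ≤ lam * Real.exp (2 - lam) := hfinal

end Helpers

set_option maxHeartbeats 2000000 in
/-- rounding a solution of the knapsack-cover LP, ℓ0-sparse bound,
respecting multiplicity constraints (Theorem `l0-alteration-multiplicity`). -/
theorem stmt_2 :
    ∃ C₀ : ℝ, 0 ≤ C₀ ∧
      ∀ (m n : ℕ) (A : Fin m → Fin n → ℝ) (c : Fin n → ℝ) (d : Fin n → ℕ)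
        (x : Fin n → ℝ) (Δ₀ : ℕ),
        (∀ i j, A i j ∈ Set.Icc (0 : ℝ) 1) →
        (∀ j, 0 ≤ c j) → (∀ j, 0 ≤ x j) →
        (∀ (S : Finset (Fin n)) (i : Fin m),
          max 0 (1 - ∑ j ∈ S, A i j * (d j : ℝ)) ≤
            ∑ j ∈ Sᶜ, min (A i j) (max 0 (1 - ∑ j' ∈ S, A i j' * (d j' : ℝ))) * x j) →
        Δ₀ = (Finset.univ.sup fun j : Fin n =>
          (Finset.univ.filter fun i : Fin m => A i j ≠ 0).card) →
        2 ≤ Δ₀ →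
        ∃ (Ω : Type) (_ : MeasureSpace Ω) (z : Ω → Fin n → ℕ),
          IsProbabilityMeasure (volume : Measure Ω) ∧
          Measurable z ∧
          (∀ᵐ ω ∂(volume : Measure Ω),
            (∀ i, 1 ≤ ∑ j, A i j * (z ω j : ℝ)) ∧ ∀ j, z ω j ≤ d j) ∧
          ∫⁻ ω, ENNReal.ofReal (∑ j, c j * (z ω j : ℝ)) ≤
            ENNReal.ofReal
              ((Real.log Δ₀ + Real.log (Real.log Δ₀) + C₀) * ∑ j, c j * x j) := by
  classical
  refine ⟨7, by norm_num, ?_⟩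
  intro m n A c d x Δ₀ hA hc hx hKC hΔdef hΔ2
  have hA0 : ∀ i j, 0 ≤ A i j := fun i j => (hA i j).1
  have hA1 : ∀ i j, A i j ≤ 1 := fun i j => (hA i j).2
  have hΔ2R : (2:ℝ) ≤ (Δ₀:ℝ) := by exact_mod_cast hΔ2
  have hΔpos : (0:ℝ) < (Δ₀:ℝ) := by linarith
  set L : ℝ := Real.log Δ₀ with hLdef
  have hlog2lb : (0.6931471803:ℝ) < Real.log 2 := Real.log_two_gt_d9
  have hL2 : Real.log 2 ≤ L := by
    rw [hLdef]
    exact Real.log_le_log (by norm_num) hΔ2R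
  have hLpos : 0 < L := by linarith
  have hLLlb : -Real.log 2 ≤ Real.log L := by
    rw [← Real.log_inv]
    apply Real.log_le_log (by norm_num)
    rw [show ((2:ℝ))⁻¹ = 0.5 by norm_num]
    linarith
  set lam : ℝ := L + Real.log L + 4 with hlamdef
  have hlam4 : 4 ≤ lam := by rw [hlamdef]; linarith
  have hexp1lt : Real.exp 1 < 2.7182818286 := Real.exp_one_lt_d9
  have hexp1gt : (2.7182818283:ℝ) < Real.exp 1 := Real.exp_one_gt_d9
  have hlame : Real.exp 1 ≤ lam := by linarith
  have hlampos : (0:ℝ) < lam := by linarith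
  -- rounding data
  set flo : Fin n → ℕ := fun j => ⌊lam * x j⌋₊ with hflodef
  set p : Fin n → ℝ := fun j => lam * x j - (flo j : ℝ) with hpdef
  have hlx0 : ∀ j, 0 ≤ lam * x j := fun j => mul_nonneg hlampos.le (hx j)
  have hp0 : ∀ j, 0 ≤ p j := by
    intro j
    rw [hpdef]
    simp only [hflodef]
    have := Nat.floor_le (hlx0 j)
    linarith
  have hp1 : ∀ j, p j ≤ 1 := by
    intro j
    rw [hpdef]
    simp only [hflodef]
    have := Nat.lt_floor_add_one (lam * x j)
    push_cast at this ⊢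
    linarith
  set base : (Fin n → Bool) → Fin n → ℕ := fun ω j =>
    if (d j : ℝ) ≤ lam * x j then d j else flo j + (if ω j then 1 else 0) with hbasedef
  have hbase_le : ∀ ω j, base ω j ≤ d j := by
    intro ω j
    rw [hbasedef]
    simp only
    by_cases h : (d j : ℝ) ≤ lam * x j
    · rw [if_pos h]
    · rw [if_neg h]
      push_neg at h
      have h1 : (flo j : ℝ) ≤ lam * x j := Nat.floor_le (hlx0 j)
      have h2 : (flo j : ℝ) < (d j : ℝ) := lt_of_le_of_lt h1 h
      have h3 : flo j < d j := by exact_mod_cast h2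
      have h4 : (if ω j then 1 else 0) ≤ 1 := by split <;> omega
      omega
  -- the saturated set
  set SS : Finset (Fin n) := Finset.univ.filter (fun j => (d j : ℝ) ≤ lam * x j) with hSSdef
  set bI : Fin m → ℝ := fun i => max 0 (1 - ∑ j ∈ SS, A i j * (d j : ℝ)) with hbIdef
  have hbI0 : ∀ i, 0 ≤ bI i := fun i => le_max_left _ _
  have hKCS : ∀ i, bI i ≤ ∑ j ∈ SSᶜ, min (A i j) (bI i) * x j := by
    intro i
    exact hKC SS i
  -- per-row integral covers from the SR lemma
  set N : Fin m → Finset (Fin n) := fun i => Finset.univ.filter (fun j => A i j ≠ 0) with hNdef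
  have hSR : ∀ i : Fin m, ∃ w : Fin n → ℕ, (∀ j, j ∉ N i → w j = 0) ∧ (∀ j, w j ≤ d j) ∧
      (1:ℝ) ≤ ∑ j ∈ N i, A i j * (w j : ℝ) ∧
      (∑ j ∈ N i, c j * (w j : ℝ)) ≤ 2 * ∑ j ∈ N i, c j * x j := by
    intro i
    have hKCrow : ∀ S' ⊆ N i, max 0 (1 - ∑ j ∈ S', A i j * (d j : ℝ)) ≤
        ∑ j ∈ N i \ S', min (A i j) (max 0 (1 - ∑ j' ∈ S', A i j' * (d j' : ℝ))) * x j := by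
      intro S' hS'
      have hdisj : Disjoint S' ((N i)ᶜ) := disjoint_compl_right.mono_left hS'
      have h1 := hKC (S' ∪ (N i)ᶜ) i
      have h3 : ∑ j ∈ (N i)ᶜ, A i j * (d j : ℝ) = 0 := by
        apply Finset.sum_eq_zero
        intro j hj
        have hj' : j ∉ N i := Finset.mem_compl.mp hj
        rw [hNdef] at hj'
        simp only [Finset.mem_filter, Finset.mem_univ, true_and] at hj'
        rw [not_not.mp hj', zero_mul]
      have h2 : ∑ j ∈ S' ∪ (N i)ᶜ, A i j * (d j : ℝ) = ∑ j ∈ S', A i j * (d j : ℝ) := by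
        rw [Finset.sum_union hdisj, h3, add_zero]
      have h4 : (S' ∪ (N i)ᶜ)ᶜ = N i \ S' := by
        ext j
        simp only [Finset.mem_compl, Finset.mem_union, Finset.mem_sdiff]
        tauto
      rw [h2, h4] at h1
      exact h1
    obtain ⟨w0, hh1, hh2, hh3, hh4, _⟩ :=
      sr n (A i) d x (hA0 i) hx ((N i).card + ((N i).filter (fun j => c j ≠ 0)).card)
        (N i) c 1 le_rfl hc one_pos hKCrow
    exact ⟨w0, hh1, hh2, hh3, hh4⟩
  choose w hw1 hw2 hw3 hw4 using hSR
  set Fail : Fin m → (Fin n → Bool) → Prop := fun i ω =>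
    0 < bI i ∧ ∑ j ∈ SSᶜ, min (A i j) (bI i) * (base ω j : ℝ) < bI i with hFaildef
  set z : (Fin n → Bool) → Fin n → ℕ := fun ω j =>
    min (d j) (base ω j + ∑ i ∈ Finset.univ.filter (fun i => Fail i ω), w i j) with hzdef
  -- deterministic feasibility
  have hfeas : ∀ ω, (∀ i, (1:ℝ) ≤ ∑ j, A i j * (z ω j : ℝ)) ∧ ∀ j, z ω j ≤ d j := by
    intro ω
    constructor
    · intro i
      by_cases hfail : Fail i ω
      · -- use the repair cover
        have hwz : ∀ j, w i j ≤ z ω j := by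
          intro j
          rw [hzdef]
          apply le_min (hw2 i j)
          calc w i j ≤ ∑ i' ∈ Finset.univ.filter (fun i' => Fail i' ω), w i' j := by
                apply Finset.single_le_sum (f := fun i' => w i' j)
                  (fun i' _ => Nat.zero_le _)
                exact Finset.mem_filter.mpr ⟨Finset.mem_univ i, hfail⟩
            _ ≤ base ω j + ∑ i' ∈ Finset.univ.filter (fun i' => Fail i' ω), w i' j :=
                Nat.le_add_left _ _
        have h5 : ∑ j ∈ N i, A i j * (w i j : ℝ) = ∑ j, A i j * (w i j : ℝ) := by
          apply Finset.sum_subset (Finset.subset_univ _)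
          intro j _ hj
          rw [hNdef] at hj
          simp only [Finset.mem_filter, Finset.mem_univ, true_and] at hj
          rw [not_not.mp hj, zero_mul]
        calc (1:ℝ) ≤ ∑ j ∈ N i, A i j * (w i j : ℝ) := hw3 i
          _ = ∑ j, A i j * (w i j : ℝ) := h5
          _ ≤ ∑ j, A i j * (z ω j : ℝ) := by
              apply Finset.sum_le_sum
              intro j _
              apply mul_le_mul_of_nonneg_left _ (hA0 i j)
              exact_mod_cast hwz j
      · -- not failed : base already covers
        have hbz : ∀ j, base ω j ≤ z ω j := by
          intro j
          rw [hzdef]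
          exact le_min (hbase_le ω j) (Nat.le_add_right _ _)
        have hzbase : ∑ j, A i j * (base ω j : ℝ) ≤ ∑ j, A i j * (z ω j : ℝ) := by
          apply Finset.sum_le_sum
          intro j _
          exact mul_le_mul_of_nonneg_left (by exact_mod_cast hbz j) (hA0 i j)
        have hsplit : ∑ j ∈ SS, A i j * (base ω j : ℝ) + ∑ j ∈ SSᶜ, A i j * (base ω j : ℝ)
            = ∑ j, A i j * (base ω j : ℝ) := Finset.sum_add_sum_compl SS _
        have hSSbase : ∑ j ∈ SS, A i j * (base ω j : ℝ) = ∑ j ∈ SS, A i j * (d j : ℝ) := by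
          apply Finset.sum_congr rfl
          intro j hj
          rw [hSSdef] at hj
          have hj' : (d j : ℝ) ≤ lam * x j := (Finset.mem_filter.mp hj).2
          rw [hbasedef]
          simp only [if_pos hj']
        have hrest : 0 ≤ ∑ j ∈ SSᶜ, A i j * (base ω j : ℝ) :=
          Finset.sum_nonneg fun j _ => mul_nonneg (hA0 i j) (Nat.cast_nonneg _)
        by_cases hbi : 0 < bI i
        · have hnf : bI i ≤ ∑ j ∈ SSᶜ, min (A i j) (bI i) * (base ω j : ℝ) := by
            by_contra h
            push_neg at h
            apply hfail
            rw [hFaildef]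
            exact ⟨hbi, h⟩
          have hcompl : ∑ j ∈ SSᶜ, min (A i j) (bI i) * (base ω j : ℝ)
              ≤ ∑ j ∈ SSᶜ, A i j * (base ω j : ℝ) := by
            apply Finset.sum_le_sum
            intro j _
            exact mul_le_mul_of_nonneg_right (min_le_left _ _) (Nat.cast_nonneg _)
          have hSSd : 1 - bI i ≤ ∑ j ∈ SS, A i j * (d j : ℝ) := by
            have h6 : 1 - ∑ j ∈ SS, A i j * (d j : ℝ) ≤ bI i := le_max_right _ _
            linarith
          have hfin : (1:ℝ) ≤ ∑ j, A i j * (base ω j : ℝ) := by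
            rw [← hsplit, hSSbase]
            have := hnf.trans hcompl
            linarith
          linarith
        · have hbi0 : bI i = 0 := le_antisymm (not_lt.mp hbi) (hbI0 i)
          have hSSd : (1:ℝ) ≤ ∑ j ∈ SS, A i j * (d j : ℝ) := by
            have h6 : 1 - ∑ j ∈ SS, A i j * (d j : ℝ) ≤ bI i := le_max_right _ _
            rw [hbi0] at h6
            linarith
          have hfin : (1:ℝ) ≤ ∑ j, A i j * (base ω j : ℝ) := by
            rw [← hsplit, hSSbase]
            linarith
          linarith
    · intro j
      exact min_le_left _ _
  -- weights
  set wR : (Fin n → Bool) → ℝ := fun ω => ∏ j, (if ω j then p j else 1 - p j) with hwRdef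
  have hwRnn : ∀ ω, 0 ≤ wR ω := by
    intro ω
    rw [hwRdef]
    apply Finset.prod_nonneg
    intro j _
    by_cases h : ω j <;> simp [h, hp0 j]
    linarith [hp1 j]
  have hwRsum : ∑ ω : Fin n → Bool, wR ω = 1 := by
    have h := expect_prod n p (fun _ _ => (1:ℝ))
    simp only [Finset.prod_const_one, mul_one] at h
    rw [hwRdef, h]
    apply Finset.prod_eq_one
    intro j _
    ring
  -- expected cost bound
  -- expectation of a single bit
  have hEbit : ∀ j₀ : Fin n, ∑ ω : Fin n → Bool, wR ω * (if ω j₀ then (1:ℝ) else 0) = p j₀ := by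
    intro j₀
    set F : Fin n → Bool → ℝ := fun j v => (if v then p j else 1 - p j) *
        (if j = j₀ then (if v then (1:ℝ) else 0) else 1) with hFdef
    have h1 : ∀ ω : Fin n → Bool,
        wR ω * (if ω j₀ then (1:ℝ) else 0) = ∏ j, F j (ω j) := by
      intro ω
      simp only [hFdef]
      rw [Finset.prod_mul_distrib, hwRdef]
      congr 1
      rw [Finset.prod_ite_eq' Finset.univ j₀ (fun j => if ω j then (1:ℝ) else 0)]
      simp
    simp_rw [h1]
    rw [← Fintype.piFinset_univ, ← Finset.prod_univ_sum]
    have h2 : ∀ j : Fin n, (∑ v : Bool, F j v) = if j = j₀ then p j else 1 := by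
      intro j
      rw [Fintype.sum_bool]
      simp only [hFdef]
      by_cases hj : j = j₀ <;> simp [hj] <;> ring
    calc ∏ j : Fin n, (∑ v : Bool, F j v)
        = ∏ j, (if j = j₀ then p j else 1) := Finset.prod_congr rfl (fun j _ => h2 j)
      _ = p j₀ := by
          rw [Finset.prod_ite_eq' Finset.univ j₀ (fun j => p j)]
          simp
  -- expected value of base
  have hEbase : ∀ j, ∑ ω : Fin n → Bool, wR ω * (base ω j : ℝ) ≤ lam * x j := by
    intro j
    by_cases hj : (d j : ℝ) ≤ lam * x j
    · have h1 : ∀ ω : Fin n → Bool, wR ω * (base ω j : ℝ) = wR ω * (d j : ℝ) := by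
        intro ω
        rw [hbasedef]
        simp only [if_pos hj]
      simp_rw [h1]
      rw [← Finset.sum_mul, hwRsum, one_mul]
      exact hj
    · have h1 : ∀ ω : Fin n → Bool, wR ω * (base ω j : ℝ)
          = wR ω * (flo j : ℝ) + wR ω * (if ω j then (1:ℝ) else 0) := by
        intro ω
        rw [hbasedef]
        simp only [if_neg hj]
        push_cast
        by_cases h : ω j <;> simp [h] <;> ring
      simp_rw [h1]
      rw [Finset.sum_add_distrib, ← Finset.sum_mul, hwRsum, one_mul, hEbit j]
      rw [hpdef]
      simp only
      linarith
  -- failure probabilities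
  have hq0 : 0 ≤ lam * Real.exp (2 - lam) := mul_nonneg hlampos.le (Real.exp_pos _).le
  have hPi : ∀ i, (∑ ω ∈ Finset.univ.filter (fun ω => Fail i ω), wR ω)
      ≤ lam * Real.exp (2 - lam) := by
    intro i
    by_cases hbi : 0 < bI i
    · set θ : Fin n → ℝ := fun j => if (d j : ℝ) ≤ lam * x j then 0 else min (A i j) (bI i)
        with hθdef
      have hθ0 : ∀ j, 0 ≤ θ j := by
        intro j
        rw [hθdef]
        simp only
        split
        · exact le_rfl
        · exact le_min (hA0 i j) (hbI0 i)
      have hθb : ∀ j, θ j ≤ bI i := by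
        intro j
        rw [hθdef]
        simp only
        split
        · exact hbI0 i
        · exact min_le_right _ _
      set D : ℝ := ∑ j, θ j * (flo j : ℝ) with hDdef
      have hD0 : 0 ≤ D :=
        Finset.sum_nonneg fun j _ => mul_nonneg (hθ0 j) (Nat.cast_nonneg _)
      set g : ℝ := bI i - D with hgdef
      have hnotSS : ∀ j, j ∈ SSᶜ → ¬ (d j : ℝ) ≤ lam * x j := by
        intro j hj
        have hj2 : j ∉ SS := Finset.mem_compl.mp hj
        rw [hSSdef] at hj2
        simp only [Finset.mem_filter, Finset.mem_univ, true_and] at hj2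
        exact hj2
      have hiden : ∀ ω : Fin n → Bool, ∑ j ∈ SSᶜ, min (A i j) (bI i) * (base ω j : ℝ)
          = D + ∑ j, θ j * (if ω j then (1:ℝ) else 0) := by
        intro ω
        have h1 : ∑ j ∈ SSᶜ, min (A i j) (bI i) * (base ω j : ℝ)
            = ∑ j, θ j * (base ω j : ℝ) := by
          symm
          rw [← Finset.sum_add_sum_compl SS (fun j => θ j * (base ω j : ℝ))]
          have hz : ∑ j ∈ SS, θ j * (base ω j : ℝ) = 0 := by
            apply Finset.sum_eq_zero
            intro j hj
            rw [hSSdef] at hj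
            have hj2 := (Finset.mem_filter.mp hj).2
            rw [hθdef]
            simp only [if_pos hj2, zero_mul]
          rw [hz, zero_add]
          apply Finset.sum_congr rfl
          intro j hj
          rw [hθdef]
          simp only [if_neg (hnotSS j hj)]
        rw [h1, hDdef, ← Finset.sum_add_distrib]
        apply Finset.sum_congr rfl
        intro j _
        by_cases hj : (d j : ℝ) ≤ lam * x j
        · rw [hθdef]
          simp only [if_pos hj]
          ring
        · rw [hθdef, hbasedef]
          simp only [if_neg hj]
          push_cast
          by_cases h : ω j <;> simp [h] <;> ring
      by_cases hg : 0 < g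
      · have hev : Finset.univ.filter (fun ω => Fail i ω)
            = Finset.univ.filter (fun ω : Fin n → Bool =>
                ∑ j, θ j * (if ω j then (1:ℝ) else 0) < g) := by
          apply Finset.filter_congr
          intro ω _
          simp only [hFaildef]
          constructor
          · rintro ⟨-, h⟩
            rw [hiden ω] at h
            rw [hgdef]
            linarith
          · intro h
            refine ⟨hbi, ?_⟩
            rw [hiden ω]
            rw [hgdef] at h
            linarith
        rw [hev]
        have ha : ∑ j, θ j * p j = ∑ j, θ j * (lam * x j) - D := by
          rw [hDdef, ← Finset.sum_sub_distrib]
          apply Finset.sum_congr rfl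
          intro j _
          rw [hpdef]
          simp only
          ring
        have hbx : ∑ j, θ j * (lam * x j) = lam * ∑ j ∈ SSᶜ, min (A i j) (bI i) * x j := by
          rw [Finset.mul_sum, ← Finset.sum_add_sum_compl SS (fun j => θ j * (lam * x j))]
          have hz : ∑ j ∈ SS, θ j * (lam * x j) = 0 := by
            apply Finset.sum_eq_zero
            intro j hj
            rw [hSSdef] at hj
            have hj2 := (Finset.mem_filter.mp hj).2
            rw [hθdef]
            simp only [if_pos hj2, zero_mul]
          rw [hz, zero_add]
          apply Finset.sum_congr rfl
          intro j hj
          rw [hθdef]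
          simp only [if_neg (hnotSS j hj)]
          ring
        have hmean : lam * bI i - bI i + g ≤ ∑ j, θ j * p j := by
          have h2 := hKCS i
          rw [ha, hbx, hgdef]
          nlinarith
        exact chernoff_row n p θ hp0 hp1 hθ0 (bI i) g lam hbi hθb hg
          (by rw [hgdef]; linarith) hlame hmean
      · have hempty : Finset.univ.filter (fun ω => Fail i ω) = ∅ := by
          apply Finset.filter_false_of_mem
          intro ω _
          simp only [hFaildef]
          rintro ⟨-, h⟩
          rw [hiden ω] at h
          have hbitnn : 0 ≤ ∑ j, θ j * (if ω j then (1:ℝ) else 0) :=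
            Finset.sum_nonneg fun j _ => mul_nonneg (hθ0 j) (by split <;> norm_num)
          push_neg at hg
          rw [hgdef] at hg
          linarith
        rw [hempty, Finset.sum_empty]
        exact hq0
    · have hempty : Finset.univ.filter (fun ω => Fail i ω) = ∅ := by
        apply Finset.filter_false_of_mem
        intro ω _
        simp only [hFaildef]
        rintro ⟨h1, -⟩
        exact hbi h1
      rw [hempty, Finset.sum_empty]
      exact hq0
  -- expected cost bound
  have hX0 : 0 ≤ ∑ j, c j * x j :=
    Finset.sum_nonneg fun j _ => mul_nonneg (hc j) (hx j)
  have hcost : ∑ ω : Fin n → Bool, wR ω * (∑ j, c j * (z ω j : ℝ))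
      ≤ (L + Real.log L + 7) * ∑ j, c j * x j := by
    set fixc : Fin m → ℝ := fun i => ∑ j ∈ N i, c j * (w i j : ℝ) with hfixcdef
    have hfixc0 : ∀ i, 0 ≤ fixc i := fun i =>
      Finset.sum_nonneg fun j _ => mul_nonneg (hc j) (Nat.cast_nonneg _)
    have hperω : ∀ ω : Fin n → Bool, ∑ j, c j * (z ω j : ℝ)
        ≤ ∑ j, c j * (base ω j : ℝ)
          + ∑ i ∈ Finset.univ.filter (fun i => Fail i ω), fixc i := by
      intro ω
      have h1 : ∀ j, (z ω j : ℝ) ≤ (base ω j : ℝ)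
          + ∑ i ∈ Finset.univ.filter (fun i => Fail i ω), (w i j : ℝ) := by
        intro j
        have h2 : z ω j ≤ base ω j + ∑ i ∈ Finset.univ.filter (fun i => Fail i ω), w i j :=
          min_le_right _ _
        calc (z ω j : ℝ)
            ≤ ((base ω j + ∑ i ∈ Finset.univ.filter (fun i => Fail i ω), w i j : ℕ) : ℝ) := by
              exact_mod_cast h2
          _ = (base ω j : ℝ)
              + ∑ i ∈ Finset.univ.filter (fun i => Fail i ω), (w i j : ℝ) := by
              push_cast
              ring
      calc ∑ j, c j * (z ω j : ℝ)
          ≤ ∑ j, c j * ((base ω j : ℝ)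
              + ∑ i ∈ Finset.univ.filter (fun i => Fail i ω), (w i j : ℝ)) :=
            Finset.sum_le_sum fun j _ => mul_le_mul_of_nonneg_left (h1 j) (hc j)
        _ = ∑ j, c j * (base ω j : ℝ)
            + ∑ j, ∑ i ∈ Finset.univ.filter (fun i => Fail i ω), c j * (w i j : ℝ) := by
            rw [← Finset.sum_add_distrib]
            apply Finset.sum_congr rfl
            intro j _
            rw [mul_add, Finset.mul_sum]
        _ = ∑ j, c j * (base ω j : ℝ)
            + ∑ i ∈ Finset.univ.filter (fun i => Fail i ω), fixc i := by
            congr 1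
            rw [Finset.sum_comm]
            apply Finset.sum_congr rfl
            intro i' _
            simp only [hfixcdef]
            symm
            apply Finset.sum_subset (Finset.subset_univ _)
            intro j _ hj
            rw [hw1 i' j hj]
            simp
    have hswap1 : ∑ ω : Fin n → Bool, wR ω * ∑ j, c j * (base ω j : ℝ)
        ≤ lam * ∑ j, c j * x j := by
      have h1 : ∀ ω : Fin n → Bool, wR ω * ∑ j, c j * (base ω j : ℝ)
          = ∑ j, c j * (wR ω * (base ω j : ℝ)) := by
        intro ω
        rw [Finset.mul_sum]
        apply Finset.sum_congr rfl
        intro j _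
        ring
      simp_rw [h1]
      rw [Finset.sum_comm]
      have h2 : ∀ j, ∑ ω : Fin n → Bool, c j * (wR ω * (base ω j : ℝ))
          = c j * ∑ ω : Fin n → Bool, wR ω * (base ω j : ℝ) := fun j =>
        (Finset.mul_sum _ _ _).symm
      simp_rw [h2]
      calc ∑ j, c j * ∑ ω : Fin n → Bool, wR ω * (base ω j : ℝ)
          ≤ ∑ j, c j * (lam * x j) :=
            Finset.sum_le_sum fun j _ => mul_le_mul_of_nonneg_left (hEbase j) (hc j)
        _ = lam * ∑ j, c j * x j := by
            rw [Finset.mul_sum]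
            apply Finset.sum_congr rfl
            intro j _
            ring
    have hswap2 : ∑ ω : Fin n → Bool,
        wR ω * ∑ i ∈ Finset.univ.filter (fun i => Fail i ω), fixc i
        ≤ (lam * Real.exp (2 - lam)) * ∑ i, fixc i := by
      have h1 : ∀ ω : Fin n → Bool,
          wR ω * ∑ i ∈ Finset.univ.filter (fun i => Fail i ω), fixc i
          = ∑ i, (if Fail i ω then wR ω * fixc i else 0) := by
        intro ω
        rw [Finset.sum_filter, Finset.mul_sum]
        apply Finset.sum_congr rfl
        intro i _
        by_cases h : Fail i ω <;> simp [h]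
      simp_rw [h1]
      rw [Finset.sum_comm]
      have h2 : ∀ i, ∑ ω : Fin n → Bool, (if Fail i ω then wR ω * fixc i else 0)
          = (∑ ω ∈ Finset.univ.filter (fun ω => Fail i ω), wR ω) * fixc i := by
        intro i
        rw [Finset.sum_mul, Finset.sum_filter]
      simp_rw [h2]
      calc ∑ i, (∑ ω ∈ Finset.univ.filter (fun ω => Fail i ω), wR ω) * fixc i
          ≤ ∑ i, (lam * Real.exp (2 - lam)) * fixc i :=
            Finset.sum_le_sum fun i _ => mul_le_mul_of_nonneg_right (hPi i) (hfixc0 i)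
        _ = (lam * Real.exp (2 - lam)) * ∑ i, fixc i := by rw [Finset.mul_sum]
    have hcount : ∑ i, fixc i ≤ 2 * ((Δ₀:ℝ) * ∑ j, c j * x j) := by
      have h1 : ∀ i, fixc i ≤ 2 * ∑ j ∈ N i, c j * x j := fun i => hw4 i
      have hcxnn : ∀ j, 0 ≤ c j * x j := fun j => mul_nonneg (hc j) (hx j)
      calc ∑ i, fixc i ≤ ∑ i, 2 * ∑ j ∈ N i, c j * x j :=
            Finset.sum_le_sum fun i _ => h1 i
        _ = 2 * ∑ i, ∑ j ∈ N i, c j * x j := by rw [Finset.mul_sum]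
        _ ≤ 2 * ((Δ₀:ℝ) * ∑ j, c j * x j) := by
            have h3 : ∀ i : Fin m, ∑ j ∈ N i, c j * x j
                = ∑ j, (if A i j ≠ 0 then c j * x j else 0) := by
              intro i
              rw [hNdef]
              exact Finset.sum_filter _ _
            have h2 : ∑ i, ∑ j ∈ N i, c j * x j ≤ (Δ₀:ℝ) * ∑ j, c j * x j := by
              simp_rw [h3]
              rw [Finset.sum_comm]
              have h4 : ∀ j, ∑ i, (if A i j ≠ 0 then c j * x j else 0)
                  = ((Finset.univ.filter (fun i => A i j ≠ 0)).card : ℝ) * (c j * x j) := by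
                intro j
                rw [← Finset.sum_filter, Finset.sum_const, nsmul_eq_mul]
              simp_rw [h4]
              calc ∑ j, ((Finset.univ.filter (fun i => A i j ≠ 0)).card : ℝ) * (c j * x j)
                  ≤ ∑ j, (Δ₀:ℝ) * (c j * x j) := by
                    apply Finset.sum_le_sum
                    intro j _
                    apply mul_le_mul_of_nonneg_right _ (hcxnn j)
                    have h5 : (Finset.univ.filter (fun i => A i j ≠ 0)).card ≤ Δ₀ := by
                      rw [hΔdef]
                      exact Finset.le_sup
                        (f := fun j : Fin n =>
                          (Finset.univ.filter (fun i : Fin m => A i j ≠ 0)).card)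
                        (Finset.mem_univ j)
                    exact_mod_cast h5
                _ = (Δ₀:ℝ) * ∑ j, c j * x j := by rw [Finset.mul_sum]
            linarith
    have hnum : (lam * Real.exp (2 - lam)) * (2 * (Δ₀:ℝ)) ≤ 3 := by
      have hΔne : (Δ₀:ℝ) ≠ 0 := ne_of_gt hΔpos
      have hLne : L ≠ 0 := ne_of_gt hLpos
      have hexp2lam : Real.exp (2 - lam) = Real.exp (-2) * ((Δ₀:ℝ))⁻¹ * L⁻¹ := by
        have harg : 2 - lam = -2 + -L + -Real.log L := by rw [hlamdef]; ring
        rw [harg, Real.exp_add, Real.exp_add, Real.exp_neg L, Real.exp_neg (Real.log L)]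
        rw [hLdef, Real.exp_log hΔpos, ← hLdef, Real.exp_log hLpos]
      have heq : (lam * Real.exp (2 - lam)) * (2 * (Δ₀:ℝ))
          = 2 * Real.exp (-2) * (lam / L) := by
        rw [hexp2lam]
        field_simp
      rw [heq]
      have hlogL : Real.log L ≤ L * 0.36788 := by
        have h2 : Real.log (L / Real.exp 1) ≤ L / Real.exp 1 - 1 :=
          Real.log_le_sub_one_of_pos (div_pos hLpos (Real.exp_pos 1))
        rw [Real.log_div hLne (Real.exp_ne_zero 1), Real.log_exp] at h2
        have h3 : L / Real.exp 1 ≤ L * 0.36788 := by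
          rw [div_le_iff₀ (Real.exp_pos 1)]
          nlinarith
        linarith
      have h4L : (4:ℝ) ≤ L * 5.8 := by nlinarith
      have h1 : lam / L ≤ 7.2 := by
        rw [div_le_iff₀ hLpos, hlamdef]
        nlinarith
      have h2 : Real.exp (-2) ≤ 0.14 := by
        have h3 : Real.exp (-2) * Real.exp 2 = 1 := by
          rw [← Real.exp_add]
          norm_num
        have h4 : (7.38:ℝ) ≤ Real.exp 2 := by
          have h5 : Real.exp 2 = Real.exp 1 * Real.exp 1 := by
            rw [← Real.exp_add]
            norm_num
          nlinarith
        nlinarith [Real.exp_pos (-2)]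
      have hlamL0 : 0 ≤ lam / L := (div_pos hlampos hLpos).le
      nlinarith [Real.exp_pos (-2)]
    calc ∑ ω : Fin n → Bool, wR ω * (∑ j, c j * (z ω j : ℝ))
        ≤ ∑ ω : Fin n → Bool, wR ω * (∑ j, c j * (base ω j : ℝ)
            + ∑ i ∈ Finset.univ.filter (fun i => Fail i ω), fixc i) :=
          Finset.sum_le_sum fun ω _ => mul_le_mul_of_nonneg_left (hperω ω) (hwRnn ω)
      _ = ∑ ω : Fin n → Bool, wR ω * ∑ j, c j * (base ω j : ℝ)
          + ∑ ω : Fin n → Bool,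
              wR ω * ∑ i ∈ Finset.univ.filter (fun i => Fail i ω), fixc i := by
          rw [← Finset.sum_add_distrib]
          apply Finset.sum_congr rfl
          intro ω _
          ring
      _ ≤ lam * ∑ j, c j * x j + (lam * Real.exp (2 - lam)) * ∑ i, fixc i :=
          add_le_add hswap1 hswap2
      _ ≤ lam * ∑ j, c j * x j
          + (lam * Real.exp (2 - lam)) * (2 * ((Δ₀:ℝ) * ∑ j, c j * x j)) := by
          have := mul_le_mul_of_nonneg_left hcount hq0
          linarith
      _ ≤ lam * ∑ j, c j * x j + 3 * ∑ j, c j * x j := by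
          have h6 : (lam * Real.exp (2 - lam)) * (2 * ((Δ₀:ℝ) * ∑ j, c j * x j))
              = ((lam * Real.exp (2 - lam)) * (2 * (Δ₀:ℝ))) * ∑ j, c j * x j := by
            ring
          rw [h6]
          have := mul_le_mul_of_nonneg_right hnum hX0
          linarith
      _ = (L + Real.log L + 7) * ∑ j, c j * x j := by
          rw [hlamdef]
          ring
  -- measure-theoretic packaging
  refine ⟨(Fin n → Bool),
    ⟨∑ ω : Fin n → Bool, ENNReal.ofReal (wR ω) • Measure.dirac ω⟩, z, ?_, ?_, ?_, ?_⟩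
  · constructor
    show (∑ ω : Fin n → Bool, ENNReal.ofReal (wR ω) • Measure.dirac ω) Set.univ = 1
    rw [Measure.coe_finset_sum]
    simp only [Finset.sum_apply, Measure.smul_apply, Measure.dirac_apply, smul_eq_mul]
    simp only [Set.mem_univ, Set.indicator_of_mem, Pi.one_apply, mul_one]
    rw [← ENNReal.ofReal_sum_of_nonneg (fun ω _ => hwRnn ω), hwRsum]
    exact ENNReal.ofReal_one
  · exact measurable_of_countable z
  · apply MeasureTheory.ae_of_all
    exact hfeas
  · have hint : ∫⁻ ω, ENNReal.ofReal (∑ j, c j * (z ω j : ℝ))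
        ∂(∑ ω : Fin n → Bool, ENNReal.ofReal (wR ω) • Measure.dirac ω)
        = ∑ ω : Fin n → Bool, ENNReal.ofReal (wR ω) *
            ENNReal.ofReal (∑ j, c j * (z ω j : ℝ)) := by
      rw [lintegral_finset_sum_measure]
      apply Finset.sum_congr rfl
      intro ω _
      rw [lintegral_smul_measure, lintegral_dirac, smul_eq_mul]
    show ∫⁻ ω, ENNReal.ofReal (∑ j, c j * (z ω j : ℝ))
        ∂(∑ ω : Fin n → Bool, ENNReal.ofReal (wR ω) • Measure.dirac ω) ≤ _
    rw [hint]
    have h1 : ∀ ω : Fin n → Bool, ENNReal.ofReal (wR ω) *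
        ENNReal.ofReal (∑ j, c j * (z ω j : ℝ))
        = ENNReal.ofReal (wR ω * (∑ j, c j * (z ω j : ℝ))) := by
      intro ω
      rw [← ENNReal.ofReal_mul (hwRnn ω)]
    simp_rw [h1]
    rw [← ENNReal.ofReal_sum_of_nonneg]
    · apply ENNReal.ofReal_le_ofReal
      calc ∑ ω : Fin n → Bool, wR ω * (∑ j, c j * (z ω j : ℝ))
          ≤ (L + Real.log L + 7) * ∑ j, c j * x j := hcost
        _ = (Real.log Δ₀ + Real.log (Real.log Δ₀) + 7) * ∑ j, c j * x j := by
            rw [hLdef]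
    · intro ω _
      apply mul_nonneg (hwRnn ω)
      apply Finset.sum_nonneg
      intro j _
      exact mul_nonneg (hc j) (Nat.cast_nonneg _)
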